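/- Fix d ≥ 1, n ≥ 1, γ > 0 and p with 0 < p < 1/4, and suppose P{M_n^{(d)} > γ} ≤ p. Then for every increasing graph property A, writing ε = √p, one has r_A(n, 1 − ε) ≤ r_A(n, ε) + 2γ; that is, δ_A(n, √p) ≤ 2γ. -/

import Mathlib

open MeasureTheory Real

noncomputable section

/-- The uniform probability measure on the unit cube `[0,1]^d`. -/
def cubeMeasure (d : ℕ) : Measure (Fin d → ℝ) :=
  Measure.pi fun _ => volume.restrict (Set.Icc (0 : ℝ) 1)

/-- The joint law of `n` i.i.d. points, each uniform on `[0,1]^d`. -/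
def sampleMeasure (d n : ℕ) : Measure (Fin n → Fin d → ℝ) :=
  Measure.pi fun _ => cubeMeasure d

/-- Euclidean distance on `Fin d → ℝ`. -/
def eDist {d : ℕ} (x y : Fin d → ℝ) : ℝ :=
  Real.sqrt (∑ k, (x k - y k) ^ 2)

lemma eDist_comm {d : ℕ} (x y : Fin d → ℝ) : eDist x y = eDist y x := by
  unfold eDist
  congr 1
  exact Finset.sum_congr rfl fun k _ => by ring

/-- The geometric graph on the points `x 0, …, x (n-1)` with radius `r`:
distinct `i`, `j` are adjacent iff the Euclidean distance of `x i` and `x j` is at most `r`. -/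
def geomGraph {d n : ℕ} (x : Fin n → Fin d → ℝ) (r : ℝ) : SimpleGraph (Fin n) where
  Adj i j := i ≠ j ∧ eDist (x i) (x j) ≤ r
  symm := ⟨fun i j h => ⟨h.1.symm, by rw [eDist_comm]; exact h.2⟩⟩
  loopless := ⟨fun i h => h.1 rfl⟩

/-- A graph property (on labelled vertex sets `Fin m`) is closed under isomorphism. -/
def IsoClosed (A : ∀ m, SimpleGraph (Fin m) → Prop) : Prop :=
  ∀ m, ∀ G G' : SimpleGraph (Fin m), Nonempty (G ≃g G') → (A m G ↔ A m G')

/-- A graph property is increasing: preserved by adding edges. -/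
def IncreasingProp (A : ∀ m, SimpleGraph (Fin m) → Prop) : Prop :=
  ∀ m, ∀ G G' : SimpleGraph (Fin m), G ≤ G' → A m G → A m G'

/-- The probability that a random geometric graph on `n` uniform points in `[0,1]^d`
with radius `r` satisfies the property `A`. -/
def geomProb (d n : ℕ) (A : ∀ m, SimpleGraph (Fin m) → Prop) (r : ℝ) : ENNReal :=
  sampleMeasure d n {x | A n (geomGraph x r)}

/-- Threshold radius `r_A(n, ε)`. -/
def thresholdRadius (d n : ℕ) (A : ∀ m, SimpleGraph (Fin m) → Prop) (ε : ℝ) : ℝ :=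
  sInf {r : ℝ | 0 < r ∧ ENNReal.ofReal ε ≤ geomProb d n A r}

/-- Threshold width `δ_A(n, ε) = r_A(n, 1-ε) - r_A(n, ε)`. -/
def thresholdWidth (d n : ℕ) (A : ∀ m, SimpleGraph (Fin m) → Prop) (ε : ℝ) : ℝ :=
  thresholdRadius d n A (1 - ε) - thresholdRadius d n A ε

/-- The bottleneck matching weight between the point sets `x` and `y`. -/
def bottleneck {d n : ℕ} (x y : Fin n → Fin d → ℝ) : ℝ :=
  ⨅ φ : Equiv.Perm (Fin n), ⨆ i, eDist (x i) (y (φ i))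

/-- The joint law of two independent samples of `n` uniform points in `[0,1]^d`. -/
def pairMeasure (d n : ℕ) : Measure ((Fin n → Fin d → ℝ) × (Fin n → Fin d → ℝ)) :=
  (sampleMeasure d n).prod (sampleMeasure d n)

/-- `G` is isomorphic to a subgraph of `G'`. -/
def IsSubgraphIso {n m : ℕ} (G : SimpleGraph (Fin n)) (G' : SimpleGraph (Fin m)) : Prop :=
  ∃ f : Fin n ↪ Fin m, ∀ i j, G.Adj i j → G'.Adj (f i) (f j)

/-- The property: every vertex has degree at least a quarter of the number of vertices. -/
def minDegProp : ∀ m, SimpleGraph (Fin m) → Prop :=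
  fun m G => ∀ v, (m : ℝ) / 4 ≤ ((G.neighborSet v).ncard : ℝ)

/-- The property of being a complete graph. -/
def completeProp : ∀ m, SimpleGraph (Fin m) → Prop :=
  fun m G => ∀ i j : Fin m, i ≠ j → G.Adj i j

instance : IsProbabilityMeasure ((volume : Measure ℝ).restrict (Set.Icc (0 : ℝ) 1)) :=
  ⟨by simp⟩

instance (d : ℕ) : IsProbabilityMeasure (cubeMeasure d) := by
  unfold cubeMeasure; infer_instance

instance (d n : ℕ) : IsProbabilityMeasure (sampleMeasure d n) := by
  unfold sampleMeasure; infer_instance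

lemma eDist_eq {d : ℕ} (x y : Fin d → ℝ) :
    eDist x y
      = dist ((WithLp.equiv 2 (Fin d → ℝ)).symm x) ((WithLp.equiv 2 (Fin d → ℝ)).symm y) := by
  rw [EuclideanSpace.dist_eq]
  unfold eDist
  congr 1
  refine Finset.sum_congr rfl fun k _ => ?_
  rw [Real.dist_eq, sq_abs]
  rfl

lemma eDist_triangle {d : ℕ} (x y z : Fin d → ℝ) : eDist x z ≤ eDist x y + eDist y z := by
  rw [eDist_eq, eDist_eq, eDist_eq]; exact dist_triangle _ _ _

/-- If the bottleneck distance between `x` and `y` is at most `γ`, there is a permutation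
matching every point of `x` to within `γ`. -/
lemma exists_perm_of_bottleneck_le {d n : ℕ} (x y : Fin n → Fin d → ℝ) {γ : ℝ}
    (h : bottleneck x y ≤ γ) :
    ∃ φ : Equiv.Perm (Fin n), ∀ i, eDist (x i) (y (φ i)) ≤ γ := by
  obtain ⟨φ₀, hφ₀⟩ := Finite.exists_min (fun φ : Equiv.Perm (Fin n) => ⨆ i, eDist (x i) (y (φ i)))
  refine ⟨φ₀, fun i => ?_⟩
  have h1 : (⨆ i, eDist (x i) (y (φ₀ i))) ≤ γ := le_trans (le_ciInf hφ₀) h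
  exact le_trans (le_ciSup (f := fun i => eDist (x i) (y (φ₀ i)))
    (Set.Finite.bddAbove (Set.finite_range _)) i) h1

/-- The key transfer lemma: if the bottleneck matching weight of `(x, y)` is at most `γ`
and `geomGraph x r` has the increasing, isomorphism-closed property `A`, then
`geomGraph y (r + 2γ)` also has it. -/
lemma transfer {d n : ℕ} (A : ∀ m, SimpleGraph (Fin m) → Prop)
    (hIso : IsoClosed A) (hInc : IncreasingProp A)
    (x y : Fin n → Fin d → ℝ) (r γ : ℝ)
    (hb : bottleneck x y ≤ γ) (hA : A n (geomGraph x r)) :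
    A n (geomGraph y (r + 2 * γ)) := by
  obtain ⟨φ, hφ⟩ := exists_perm_of_bottleneck_le x y hb
  set G₁ := geomGraph x r with hG₁
  set G₂ : SimpleGraph (Fin n) :=
    { Adj := fun i j => G₁.Adj (φ.symm i) (φ.symm j)
      symm := ⟨fun i j h => G₁.adj_symm h⟩
      loopless := ⟨fun i h => G₁.irrefl h⟩ } with hG₂
  have hiso : Nonempty (G₁ ≃g G₂) := by
    refine ⟨⟨φ, ?_⟩⟩
    intro i j
    simp [hG₂, Equiv.symm_apply_apply]
  have hA₂ : A n G₂ := (hIso n G₁ G₂ hiso).mp hA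
  refine hInc n G₂ (geomGraph y (r + 2 * γ)) ?_ hA₂
  intro i j hadj
  obtain ⟨hne, hle⟩ := hadj
  constructor
  · intro hij
    exact hne (by rw [hij])
  · have h1 : eDist (y i) (x (φ.symm i)) ≤ γ := by
      rw [eDist_comm]
      have := hφ (φ.symm i)
      rwa [Equiv.apply_symm_apply] at this
    have h2 : eDist (x (φ.symm j)) (y j) ≤ γ := by
      have := hφ (φ.symm j)
      rwa [Equiv.apply_symm_apply] at this
    calc eDist (y i) (y j)
        ≤ eDist (y i) (x (φ.symm i)) + eDist (x (φ.symm i)) (y j) := eDist_triangle _ _ _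
      _ ≤ eDist (y i) (x (φ.symm i))
          + (eDist (x (φ.symm i)) (x (φ.symm j)) + eDist (x (φ.symm j)) (y j)) := by
          exact add_le_add_right (eDist_triangle _ _ _) _
      _ ≤ γ + (r + γ) := by
          exact add_le_add h1 (add_le_add hle h2)
      _ = r + 2 * γ := by ring

/-- if the bottleneck matching weight exceeds `γ` with probability at most
`p < 1/4`, then every increasing graph property has `√p`-width at most `2γ`. -/
theorem stmt6 (d n : ℕ) (hd : 1 ≤ d) (hn : 1 ≤ n) (γ p : ℝ)
    (hγ : 0 < γ) (hp0 : 0 < p) (hp1 : p < 1 / 4)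
    (hM : pairMeasure d n {q | γ < bottleneck q.1 q.2} ≤ ENNReal.ofReal p)
    (A : ∀ m, SimpleGraph (Fin m) → Prop) (hIso : IsoClosed A) (hInc : IncreasingProp A) :
    thresholdRadius d n A (1 - Real.sqrt p) ≤ thresholdRadius d n A (Real.sqrt p) + 2 * γ := by
  set ε := Real.sqrt p with hε
  have hε0 : 0 < ε := Real.sqrt_pos.mpr hp0
  have hεhalf : ε < 1 / 2 := by
    have h1 : Real.sqrt p < Real.sqrt (1 / 4) := Real.sqrt_lt_sqrt hp0.le hp1
    have h2 : Real.sqrt (1 / 4) = 1 / 2 := by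
      rw [show (1:ℝ)/4 = (1/2)^2 by norm_num, Real.sqrt_sq (by norm_num)]
    rw [h2] at h1
    exact h1
  -- key step
  have key : ∀ r : ℝ, 0 < r → ENNReal.ofReal ε ≤ geomProb d n A r →
      ENNReal.ofReal (1 - ε) ≤ geomProb d n A (r + 2 * γ) := by
    intro r hr hprob
    set S : Set (Fin n → Fin d → ℝ) := {x | A n (geomGraph x r)} with hS
    set T : Set (Fin n → Fin d → ℝ) := {y | ¬ A n (geomGraph y (r + 2 * γ))} with hT
    have hsub : S ×ˢ T ⊆ {q : (Fin n → Fin d → ℝ) × (Fin n → Fin d → ℝ) |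
        γ < bottleneck q.1 q.2} := by
      rintro ⟨x, y⟩ ⟨hx, hy⟩
      simp only [Set.mem_setOf_eq]
      by_contra hcon
      push_neg at hcon
      exact hy (transfer A hIso hInc x y r γ hcon hx)
    have hprod : sampleMeasure d n S * sampleMeasure d n T ≤ ENNReal.ofReal p := by
      calc sampleMeasure d n S * sampleMeasure d n T
          = pairMeasure d n (S ×ˢ T) := (Measure.prod_prod S T).symm
        _ ≤ pairMeasure d n {q | γ < bottleneck q.1 q.2} := measure_mono hsub
        _ ≤ ENNReal.ofReal p := hM
    have hT_le : sampleMeasure d n T ≤ ENNReal.ofReal ε := by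
      by_contra hcon
      push_neg at hcon
      have h1 : ENNReal.ofReal p < sampleMeasure d n S * sampleMeasure d n T := by
        have hp' : ENNReal.ofReal p = ENNReal.ofReal ε * ENNReal.ofReal ε := by
          rw [← ENNReal.ofReal_mul hε0.le, hε, Real.mul_self_sqrt hp0.le]
        rw [hp']
        calc ENNReal.ofReal ε * ENNReal.ofReal ε
            < ENNReal.ofReal ε * sampleMeasure d n T := by
              rw [ENNReal.mul_lt_mul_iff_right (by simpa using hε0) ENNReal.ofReal_ne_top]
              exact hcon
          _ ≤ sampleMeasure d n S * sampleMeasure d n T :=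
              mul_le_mul_left hprob _
      exact absurd hprod (not_le.mpr h1)
    have hcompl : geomProb d n A (r + 2 * γ) = sampleMeasure d n Tᶜ := by
      unfold geomProb
      congr 1
      ext y
      simp [hT]
    rw [hcompl]
    have huniv : (1 : ENNReal) ≤ sampleMeasure d n T + sampleMeasure d n Tᶜ := by
      have : sampleMeasure d n (T ∪ Tᶜ) ≤ sampleMeasure d n T + sampleMeasure d n Tᶜ :=
        measure_union_le T Tᶜ
      simpa [Set.union_compl_self] using this
    have h1ε : ENNReal.ofReal (1 - ε) = 1 - ENNReal.ofReal ε := by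
      rw [ENNReal.ofReal_sub _ hε0.le, ENNReal.ofReal_one]
    rw [h1ε, tsub_le_iff_right]
    calc (1 : ENNReal) ≤ sampleMeasure d n T + sampleMeasure d n Tᶜ := huniv
      _ ≤ ENNReal.ofReal ε + sampleMeasure d n Tᶜ := add_le_add_left hT_le _
      _ = sampleMeasure d n Tᶜ + ENNReal.ofReal ε := add_comm _ _
  -- conclude
  set Sε := {r : ℝ | 0 < r ∧ ENNReal.ofReal ε ≤ geomProb d n A r} with hSε
  by_cases hne : Sε.Nonempty
  · have hlb : ∀ r ∈ Sε, thresholdRadius d n A (1 - ε) - 2 * γ ≤ r := by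
      intro r hr
      have hmem : r + 2 * γ ∈ {r : ℝ | 0 < r ∧ ENNReal.ofReal (1 - ε) ≤ geomProb d n A r} :=
        ⟨by linarith [hr.1], key r hr.1 hr.2⟩
      have : thresholdRadius d n A (1 - ε) ≤ r + 2 * γ :=
        csInf_le ⟨0, fun t ht => ht.1.le⟩ hmem
      linarith
    have : thresholdRadius d n A (1 - ε) - 2 * γ ≤ sInf Sε := le_csInf hne hlb
    have hthr : thresholdRadius d n A ε = sInf Sε := rfl
    rw [hthr]
    linarith
  · -- the set for ε is empty, hence so is the set for 1 - ε
    have hempty : {r : ℝ | 0 < r ∧ ENNReal.ofReal (1 - ε) ≤ geomProb d n A r} = ∅ := by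
      rw [Set.eq_empty_iff_forall_notMem]
      intro r hr
      apply hne
      refine ⟨r, hr.1, le_trans ?_ hr.2⟩
      exact ENNReal.ofReal_le_ofReal (by linarith)
    unfold thresholdRadius
    rw [hempty, Real.sInf_empty]
    have : sInf Sε = 0 := by
      rw [Set.not_nonempty_iff_eq_empty] at hne
      rw [hSε] at hne ⊢
      rw [hne, Real.sInf_empty]
    rw [hSε] at this
    rw [this]
    linarith
end
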